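/- Let p ≡ 1 (mod 4) be prime, i ∈ 𝔽_p with i² = -1, E: y² = x³ - x over 𝔽_p, and η(P) = P + [i]P. If (x, y) ∈ E(𝔽_p) with x ≠ 0, then the x-coordinate of η(x,y) equals ((1-i)y/(2x))², and in particular is a square in 𝔽_p. -/

import Mathlib

/-- The elliptic curve `y² = x³ - x` over `ℤ/pℤ`, as a Weierstrass curve in affine coordinates. -/
noncomputable def Ecurve (p : ℕ) : WeierstrassCurve.Affine (ZMod p) :=
  { a₁ := 0, a₂ := 0, a₃ := 0, a₄ := -1, a₆ := 0 }

theorem stmt5 (p : ℕ) [Fact p.Prime] (h4 : p % 4 = 1) (i : ZMod p) (hi : i ^ 2 = -1)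
    (φ : (Ecurve p).Point → (Ecurve p).Point) (hφ0 : φ 0 = 0)
    (hφ : ∀ (x y : ZMod p) (h : (Ecurve p).Nonsingular x y),
      ∃ h' : (Ecurve p).Nonsingular (-x) (i * y),
        φ (WeierstrassCurve.Affine.Point.some _ _ h) = WeierstrassCurve.Affine.Point.some _ _ h')
    (x y : ZMod p) (h : (Ecurve p).Nonsingular x y) (hx : x ≠ 0) :
    ∃ (x' y' : ZMod p) (h' : (Ecurve p).Nonsingular x' y'),
      WeierstrassCurve.Affine.Point.some _ _ h + φ (WeierstrassCurve.Affine.Point.some _ _ h) =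
        WeierstrassCurve.Affine.Point.some _ _ h' ∧
      x' = ((1 - i) * y / (2 * x)) ^ 2 ∧ IsSquare x' := by
  obtain ⟨h', hφeq⟩ := hφ x y h
  have h2 : (2 : ZMod p) ≠ 0 := by
    intro h0
    have : ((2 : ℕ) : ZMod p) = 0 := by exact_mod_cast h0
    have hd := (ZMod.natCast_eq_zero_iff 2 p).mp this
    have := (Nat.prime_dvd_prime_iff_eq (Fact.out : p.Prime) Nat.prime_two).mp hd
    omega
  have hxne : x ≠ -x := by
    intro hxx
    apply hx
    have : (2 : ZMod p) * x = 0 := by linear_combination hxx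
    rcases mul_eq_zero.mp this with h0 | h0
    · exact absurd h0 h2
    · exact h0
  rw [hφeq, WeierstrassCurve.Affine.Point.add_of_X_ne hxne]
  have hL : (Ecurve p).slope x (-x) y (i * y) = (1 - i) * y / (2 * x) := by
    rw [WeierstrassCurve.Affine.slope_of_X_ne hxne,
      show x - -x = 2 * x from by ring, show y - i * y = (1 - i) * y from by ring]
  have hx' : (Ecurve p).addX x (-x) ((Ecurve p).slope x (-x) y (i * y))
      = ((1 - i) * y / (2 * x)) ^ 2 := by
    rw [hL]
    simp only [WeierstrassCurve.Affine.addX, Ecurve]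
    ring
  exact ⟨_, _, _, rfl, hx', hx' ▸ ⟨_, pow_two _⟩⟩
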